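/- Let K ∈ L¹(ℝ) be even and real-valued, let f : ℝ → ℝ be continuously differentiable with F' = f for some F, and let u : ℝ × I → ℝ (I an open interval) be continuously differentiable, 2π-periodic in x, and satisfy u_t(x,t) + ∂_x[f(u(x,t))] + (K∗u_x(·,t))(x) = 0 for all x and t ∈ I, where (K∗w)(x) = ∫_ℝ K(ξ)w(x−ξ)dξ. Then the Hamiltonian H(t) = ∫₀^{2π} [F(u(x,t)) + ½u(x,t)·(K∗u(·,t))(x)]dx is constant in t. -/

import Mathlib

open MeasureTheory Real Set

noncomputable def pdx (u : ℝ → ℝ → ℝ) (x t : ℝ) : ℝ := fderiv ℝ (Function.uncurry u) (x, t) (1, 0)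
noncomputable def pdt (u : ℝ → ℝ → ℝ) (x t : ℝ) : ℝ := fderiv ℝ (Function.uncurry u) (x, t) (0, 1)

lemma hasDerivAt_pdx {u : ℝ → ℝ → ℝ} (hu : ContDiff ℝ 1 (Function.uncurry u)) (x t : ℝ) :
    HasDerivAt (fun y => u y t) (pdx u x t) x := by
  have h := (hu.differentiable one_ne_zero (x, t)).hasFDerivAt
  have hl : HasDerivAt (fun y : ℝ => (y, t)) ((1:ℝ), (0:ℝ)) x :=
    (hasDerivAt_id x).prodMk (hasDerivAt_const x t)
  exact h.comp_hasDerivAt x hl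

lemma hasDerivAt_pdt {u : ℝ → ℝ → ℝ} (hu : ContDiff ℝ 1 (Function.uncurry u)) (x t : ℝ) :
    HasDerivAt (fun s => u x s) (pdt u x t) t := by
  have h := (hu.differentiable one_ne_zero (x, t)).hasFDerivAt
  have hl : HasDerivAt (fun s : ℝ => (x, s)) ((0:ℝ), (1:ℝ)) t :=
    (hasDerivAt_const t x).prodMk (hasDerivAt_id t)
  exact h.comp_hasDerivAt t hl

lemma continuous_pdx {u : ℝ → ℝ → ℝ} (hu : ContDiff ℝ 1 (Function.uncurry u)) :
    Continuous (fun p : ℝ × ℝ => pdx u p.1 p.2) :=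
  (hu.continuous_fderiv one_ne_zero).clm_apply continuous_const

lemma continuous_pdt {u : ℝ → ℝ → ℝ} (hu : ContDiff ℝ 1 (Function.uncurry u)) :
    Continuous (fun p : ℝ × ℝ => pdt u p.1 p.2) :=
  (hu.continuous_fderiv one_ne_zero).clm_apply continuous_const

lemma pdx_periodic {u : ℝ → ℝ → ℝ} (hu : ContDiff ℝ 1 (Function.uncurry u))
    (hper : ∀ t, Function.Periodic (fun x => u x t) (2 * π)) (t : ℝ) :
    Function.Periodic (fun x => pdx u x t) (2 * π) := by
  intro x
  have h1 : HasDerivAt (fun y => u (y + 2 * π) t) (pdx u (x + 2 * π) t) x := by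
    have := (hasDerivAt_pdx hu (x + 2 * π) t).comp x
      ((hasDerivAt_id x).add_const (2 * π))
    rw [mul_one] at this
    exact this
  have h2 : HasDerivAt (fun y => u y t) (pdx u (x + 2 * π) t) x := by
    have heq : (fun y => u (y + 2 * π) t) = fun y => u y t := funext fun y => hper t y
    rwa [heq] at h1
  exact h2.unique (hasDerivAt_pdx hu x t)

lemma pdt_periodic {u : ℝ → ℝ → ℝ} (hu : ContDiff ℝ 1 (Function.uncurry u))
    (hper : ∀ t, Function.Periodic (fun x => u x t) (2 * π)) (t : ℝ) :
    Function.Periodic (fun x => pdt u x t) (2 * π) := by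
  intro x
  have h1 : HasDerivAt (fun s => u x s) (pdt u (x + 2 * π) t) t := by
    have heq : (fun s => u (x + 2 * π) s) = fun s => u x s := funext fun s => hper s x
    have := hasDerivAt_pdt hu (x + 2 * π) t
    rwa [heq] at this
  exact h1.unique (hasDerivAt_pdt hu x t)

lemma bound_of_periodic2 {g : ℝ → ℝ → ℝ} (hg : Continuous (fun p : ℝ × ℝ => g p.1 p.2))
    (hper : ∀ t, Function.Periodic (fun x => g x t) (2 * π)) (c d : ℝ) :
    ∃ C, 0 ≤ C ∧ ∀ x : ℝ, ∀ t ∈ Icc c d, |g x t| ≤ C := by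
  obtain ⟨C, hC⟩ := ((isCompact_Icc (a := (0:ℝ)) (b := 2 * π)).prod
    (isCompact_Icc (a := c) (b := d))).exists_bound_of_continuousOn hg.continuousOn
  refine ⟨max C 0, le_max_right _ _, fun x t ht => ?_⟩
  obtain ⟨y, hy, hxy⟩ := (hper t).exists_mem_Ico₀ Real.two_pi_pos x
  rw [hxy]
  exact le_trans (hC (y, t) ⟨Ico_subset_Icc_self hy, ht⟩) (le_max_left _ _)

noncomputable def conv (K w : ℝ → ℝ) (x : ℝ) : ℝ := ∫ ξ : ℝ, K ξ * w (x - ξ)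

lemma prod_integrable {K : ℝ → ℝ} (hK : Integrable K) {h : ℝ × ℝ → ℝ} (hh : Continuous h)
    {C : ℝ} (hC : ∀ p, |h p| ≤ C) :
    Integrable (fun p : ℝ × ℝ => h p * K p.2)
      ((volume.restrict (Ioc (0:ℝ) (2 * π))).prod volume) := by
  have inst : IsFiniteMeasure (volume.restrict (Ioc (0:ℝ) (2 * π))) := by
    constructor
    rw [Measure.restrict_apply_univ]
    exact measure_Ioc_lt_top
  have hKs : Integrable (fun p : ℝ × ℝ => K p.2)
      ((volume.restrict (Ioc (0:ℝ) (2 * π))).prod volume) := by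
    rw [integrable_prod_iff (hK.aestronglyMeasurable.comp_snd)]
    refine ⟨Filter.Eventually.of_forall fun x => hK, ?_⟩
    exact integrable_const (μ := volume.restrict (Ioc (0:ℝ) (2 * π))) (∫ y : ℝ, ‖K y‖)
  exact hKs.bdd_mul (c := C) hh.aestronglyMeasurable (Filter.Eventually.of_forall fun p => by simpa using hC p)

lemma bound_of_periodic {g : ℝ → ℝ} (hg : Continuous g)
    (hper : Function.Periodic g (2 * π)) : ∃ C, 0 ≤ C ∧ ∀ x, |g x| ≤ C := by
  obtain ⟨C, hC⟩ := (isCompact_Icc (a := (0:ℝ)) (b := 2 * π)).exists_bound_of_continuousOn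
    hg.continuousOn
  refine ⟨max C 0, le_max_right _ _, fun x => ?_⟩
  obtain ⟨y, hy, hxy⟩ := hper.exists_mem_Ico₀ Real.two_pi_pos x
  rw [hxy]
  exact le_trans (hC y (Ico_subset_Icc_self hy)) (le_max_left _ _)

lemma shift_integral {v w : ℝ → ℝ} (hvp : Function.Periodic v (2 * π))
    (hwp : Function.Periodic w (2 * π)) (ξ : ℝ) :
    ∫ x in (0:ℝ)..(2 * π), v x * w (x - ξ) = ∫ x in (0:ℝ)..(2 * π), v (x + ξ) * w x := by
  have h1 := intervalIntegral.integral_comp_add_right (a := -ξ) (b := 2 * π - ξ)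
    (fun x => v x * w (x - ξ)) ξ
  have h2 : ∫ x in (-ξ)..(2 * π - ξ), v (x + ξ) * w x
      = ∫ x in (0:ℝ)..(2 * π), v x * w (x - ξ) := by
    simpa using h1
  rw [← h2]
  have hφ : Function.Periodic (fun x => v (x + ξ) * w x) (2 * π) := by
    intro x
    have hx : x + 2 * π + ξ = x + ξ + 2 * π := by ring
    simp only [hx, hvp (x + ξ), hwp x]
  have := hφ.intervalIntegral_add_eq (-ξ) 0
  simpa [show -ξ + 2 * π = 2 * π - ξ by ring] using this

lemma conv_symm {K v w : ℝ → ℝ} (hK : Integrable K) (hKe : ∀ x, K (-x) = K x)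
    (hv : Continuous v) (hw : Continuous w)
    (hvp : Function.Periodic v (2 * π)) (hwp : Function.Periodic w (2 * π)) :
    ∫ x in (0:ℝ)..(2 * π), v x * conv K w x
      = ∫ x in (0:ℝ)..(2 * π), w x * conv K v x := by
  obtain ⟨Cv, hCv0, hCv⟩ := bound_of_periodic hv hvp
  obtain ⟨Cw, hCw0, hCw⟩ := bound_of_periodic hw hwp
  have h2π : (0:ℝ) ≤ 2 * π := by positivity
  have hbound : ∀ a b : ℝ, |v a * w b| ≤ Cv * Cw := fun a b => by
    rw [abs_mul]; exact mul_le_mul (hCv a) (hCw b) (abs_nonneg _) hCv0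
  -- integrability of both product functions
  have hint1 : Integrable (fun p : ℝ × ℝ => (v p.1 * w (p.1 - p.2)) * K p.2)
      ((volume.restrict (Ioc (0:ℝ) (2 * π))).prod volume) :=
    prod_integrable hK ((hv.comp continuous_fst).mul
      (hw.comp (continuous_fst.sub continuous_snd))) (fun p => hbound _ _)
  have hint2 : Integrable (fun p : ℝ × ℝ => (v (p.1 - p.2) * w p.1) * K p.2)
      ((volume.restrict (Ioc (0:ℝ) (2 * π))).prod volume) :=
    prod_integrable hK ((hv.comp (continuous_fst.sub continuous_snd)).mul
      (hw.comp continuous_fst)) (fun p => hbound _ _)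
  -- step A
  have stepA : (∫ x in (0:ℝ)..(2 * π), v x * conv K w x)
      = ∫ ξ : ℝ, ∫ x in Ioc (0:ℝ) (2 * π), (v x * w (x - ξ)) * K ξ := by
    rw [intervalIntegral.integral_of_le h2π, ← integral_integral_swap hint1]
    apply integral_congr_ae
    filter_upwards with x
    unfold conv
    rw [← integral_const_mul]
    apply integral_congr_ae
    filter_upwards with ξ
    ring
  -- step D (reverse)
  have stepD : (∫ ξ : ℝ, ∫ x in Ioc (0:ℝ) (2 * π), (v (x - ξ) * w x) * K ξ)
      = ∫ x in (0:ℝ)..(2 * π), w x * conv K v x := by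
    rw [intervalIntegral.integral_of_le h2π, ← integral_integral_swap hint2]
    apply integral_congr_ae
    filter_upwards with x
    unfold conv
    rw [← integral_const_mul]
    apply integral_congr_ae
    filter_upwards with ξ
    ring
  rw [stepA, ← stepD]
  -- middle: change variables
  have mid : ∀ ξ : ℝ, (∫ x in Ioc (0:ℝ) (2 * π), (v x * w (x - ξ)) * K ξ)
      = K ξ * ∫ x in (0:ℝ)..(2 * π), v (x + ξ) * w x := by
    intro ξ
    rw [← intervalIntegral.integral_of_le h2π]
    rw [show (∫ x in (0:ℝ)..(2 * π), (v x * w (x - ξ)) * K ξ)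
        = (∫ x in (0:ℝ)..(2 * π), v x * w (x - ξ)) * K ξ from
      intervalIntegral.integral_mul_const _ _]
    rw [shift_integral hvp hwp ξ, mul_comm]
  have mid2 : ∀ ξ : ℝ, (∫ x in Ioc (0:ℝ) (2 * π), (v (x - ξ) * w x) * K ξ)
      = K ξ * ∫ x in (0:ℝ)..(2 * π), v (x - ξ) * w x := by
    intro ξ
    rw [← intervalIntegral.integral_of_le h2π, intervalIntegral.integral_mul_const, mul_comm]
  simp only [mid, mid2]
  rw [← MeasureTheory.integral_neg_eq_self (fun ξ => K ξ * ∫ x in (0:ℝ)..(2 * π), v (x + ξ) * w x) volume]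
  apply integral_congr_ae
  filter_upwards with ξ
  rw [hKe ξ]
  congr 1

lemma conv_integrand_integrable {K w : ℝ → ℝ} (hK : Integrable K) (hw : Continuous w)
    {C : ℝ} (hC : ∀ y, |w y| ≤ C) (x : ℝ) :
    Integrable (fun ξ => K ξ * w (x - ξ)) := by
  have := hK.bdd_mul (f := fun ξ => w (x - ξ))
    ((hw.comp (continuous_const.sub continuous_id)).aestronglyMeasurable)
    (c := C) (Filter.Eventually.of_forall fun ξ => by simpa using hC _)
  simpa [mul_comm] using this

lemma conv_continuous {K w : ℝ → ℝ} (hK : Integrable K) (hw : Continuous w)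
    {C : ℝ} (hC : ∀ y, |w y| ≤ C) : Continuous (conv K w) := by
  apply continuous_of_dominated (bound := fun ξ => |K ξ| * C)
  · exact fun x => (conv_integrand_integrable hK hw hC x).aestronglyMeasurable
  · intro x
    filter_upwards with ξ
    rw [norm_mul]
    exact mul_le_mul_of_nonneg_left (by simpa using hC (x - ξ)) (norm_nonneg _)
  · exact hK.norm.mul_const C
  · filter_upwards with ξ
    exact continuous_const.mul (hw.comp (continuous_id.sub continuous_const))

lemma conv_bound {K w : ℝ → ℝ} (hK : Integrable K) {C : ℝ}
    (hC : ∀ y, |w y| ≤ C) (x : ℝ) :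
    |∫ ξ : ℝ, K ξ * w (x - ξ)| ≤ (∫ ξ : ℝ, |K ξ|) * C := by
  have h := norm_integral_le_of_norm_le (f := fun ξ : ℝ => K ξ * w (x - ξ)) (hK.norm.mul_const C)
    (Filter.Eventually.of_forall (fun ξ : ℝ => by
      rw [norm_mul]
      exact mul_le_mul_of_nonneg_left (by simpa using hC (x - ξ)) (norm_nonneg _)))
  rw [MeasureTheory.integral_mul_const] at h
  simpa using h

lemma conv_x_hasDerivAt {K : ℝ → ℝ} (hK : Integrable K) {u : ℝ → ℝ → ℝ}
    (hu : ContDiff ℝ 1 (Function.uncurry u))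
    (hper : ∀ t, Function.Periodic (fun x => u x t) (2 * π)) (t x₀ : ℝ) :
    HasDerivAt (fun x => ∫ ξ : ℝ, K ξ * u (x - ξ) t) (∫ ξ : ℝ, K ξ * pdx u (x₀ - ξ) t) x₀ := by
  have hucont : Continuous (fun x => u x t) :=
    hu.continuous.comp (continuous_id.prodMk continuous_const)
  have hpdxcont : Continuous (fun x => pdx u x t) :=
    (continuous_pdx hu).comp (continuous_id.prodMk continuous_const)
  obtain ⟨Cu, hCu0, hCu⟩ := bound_of_periodic hucont (hper t)
  obtain ⟨Cx, hCx0, hCx⟩ := bound_of_periodic hpdxcont (pdx_periodic hu hper t)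
  have h := hasDerivAt_integral_of_dominated_loc_of_deriv_le
    (F := fun x ξ => K ξ * u (x - ξ) t) (F' := fun x ξ => K ξ * pdx u (x - ξ) t)
    (x₀ := x₀) (s := Metric.ball x₀ 1) (bound := fun ξ => |K ξ| * Cx) (Metric.ball_mem_nhds _ one_pos)
    (Filter.Eventually.of_forall fun x =>
      (conv_integrand_integrable hK hucont hCu x).aestronglyMeasurable)
    (conv_integrand_integrable hK hucont hCu x₀)
    (conv_integrand_integrable hK hpdxcont hCx x₀).aestronglyMeasurable
    (Filter.Eventually.of_forall fun ξ => fun x _ => by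
      rw [norm_mul]
      exact mul_le_mul_of_nonneg_left (by simpa using hCx (x - ξ)) (norm_nonneg _))
    (hK.norm.mul_const Cx)
    (Filter.Eventually.of_forall fun ξ => fun x _ => by
      have := ((hasDerivAt_pdx hu (x - ξ) t).comp x ((hasDerivAt_id x).sub_const ξ)).const_mul (K ξ)
      simpa using this)
  exact h.2

lemma conv_t_hasDerivAt {K : ℝ → ℝ} (hK : Integrable K) {u : ℝ → ℝ → ℝ}
    (hu : ContDiff ℝ 1 (Function.uncurry u))
    (hper : ∀ t, Function.Periodic (fun x => u x t) (2 * π)) (x t₀ : ℝ) :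
    HasDerivAt (fun t => ∫ ξ : ℝ, K ξ * u (x - ξ) t) (∫ ξ : ℝ, K ξ * pdt u (x - ξ) t₀) t₀ := by
  have hucont : Continuous (fun y => u y t₀) :=
    hu.continuous.comp (continuous_id.prodMk continuous_const)
  obtain ⟨Ct, hCt0, hCt⟩ := bound_of_periodic2 (continuous_pdt hu) (pdt_periodic hu hper)
    (t₀ - 1) (t₀ + 1)
  have hball : ∀ t ∈ Metric.ball t₀ 1, t ∈ Icc (t₀ - 1) (t₀ + 1) := by
    intro t ht
    rw [Real.ball_eq_Ioo] at ht
    exact Ioo_subset_Icc_self ht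
  have hmeas : ∀ t : ℝ, AEStronglyMeasurable (fun ξ => K ξ * u (x - ξ) t) volume := by
    intro t
    exact (hK.aestronglyMeasurable.mul
      ((hu.continuous.comp ((continuous_const.sub continuous_id).prodMk
        continuous_const)).aestronglyMeasurable))
  obtain ⟨Cu, hCu0, hCu⟩ := bound_of_periodic hucont (hper t₀)
  have h := hasDerivAt_integral_of_dominated_loc_of_deriv_le
    (F := fun t ξ => K ξ * u (x - ξ) t) (F' := fun t ξ => K ξ * pdt u (x - ξ) t)
    (x₀ := t₀) (s := Metric.ball t₀ 1) (bound := fun ξ => |K ξ| * Ct) (Metric.ball_mem_nhds _ one_pos)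
    (Filter.Eventually.of_forall hmeas)
    (conv_integrand_integrable hK hucont hCu x)
    ((hK.aestronglyMeasurable.mul
      (((continuous_pdt hu).comp ((continuous_const.sub continuous_id).prodMk
        continuous_const)).aestronglyMeasurable)))
    (Filter.Eventually.of_forall fun ξ => fun t ht => by
      rw [norm_mul]
      exact mul_le_mul_of_nonneg_left
        (by simpa using hCt (x - ξ) t (hball t ht)) (norm_nonneg _))
    (hK.norm.mul_const Ct)
    (Filter.Eventually.of_forall fun ξ => fun t _ =>
      (hasDerivAt_pdt hu (x - ξ) t).const_mul (K ξ))
  exact h.2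
theorem whitham_hamiltonian_conserved
    (K : ℝ → ℝ) (hK : Integrable K) (hKeven : ∀ x, K (-x) = K x)
    (f F : ℝ → ℝ) (hf : ContDiff ℝ 1 f) (hF : ∀ x, HasDerivAt F (f x) x)
    (a b : ℝ) (u : ℝ → ℝ → ℝ) (hu : ContDiff ℝ 1 (Function.uncurry u))
    (hper : ∀ t, Function.Periodic (fun x => u x t) (2 * π))
    (hPDE : ∀ x : ℝ, ∀ t ∈ Set.Ioo a b,
      deriv (fun s => u x s) t + deriv (fun y => f (u y t)) x
        + ∫ ξ : ℝ, K ξ * deriv (fun y => u y t) (x - ξ) = 0)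
    (t₁ t₂ : ℝ) (ht₁ : t₁ ∈ Set.Ioo a b) (ht₂ : t₂ ∈ Set.Ioo a b) :
    (∫ x in (0:ℝ)..(2 * π),
        (F (u x t₁) + (1 / 2) * u x t₁ * ∫ ξ : ℝ, K ξ * u (x - ξ) t₁))
      = ∫ x in (0:ℝ)..(2 * π),
          (F (u x t₂) + (1 / 2) * u x t₂ * ∫ ξ : ℝ, K ξ * u (x - ξ) t₂) := by
  have hucont : Continuous (Function.uncurry u) := hu.continuous
  have huc : ∀ t, Continuous (fun x => u x t) := fun t =>
    hucont.comp (continuous_id.prodMk continuous_const)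
  have hpdtc : ∀ t, Continuous (fun x => pdt u x t) := fun t =>
    (continuous_pdt hu).comp (continuous_id.prodMk continuous_const)
  have hpdxc : ∀ t, Continuous (fun x => pdx u x t) := fun t =>
    (continuous_pdx hu).comp (continuous_id.prodMk continuous_const)
  have hFdiff : Differentiable ℝ F := fun z => (hF z).differentiableAt
  have hFc : Continuous F := hFdiff.continuous
  set H : ℝ → ℝ := fun t => ∫ x in (0:ℝ)..(2 * π),
      (F (u x t) + (1 / 2) * u x t * ∫ ξ : ℝ, K ξ * u (x - ξ) t) with hHdef
  show H t₁ = H t₂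
  set Φ' : ℝ → ℝ → ℝ := fun x t =>
    f (u x t) * pdt u x t +
      (1 / 2 * pdt u x t * (∫ ξ : ℝ, K ξ * u (x - ξ) t) +
        1 / 2 * u x t * (∫ ξ : ℝ, K ξ * pdt u (x - ξ) t)) with hΦdef
  have hconv_cont : ∀ t, Continuous (fun x => ∫ ξ : ℝ, K ξ * u (x - ξ) t) := by
    intro t
    obtain ⟨C, hC0, hC⟩ := bound_of_periodic (huc t) (hper t)
    exact conv_continuous hK (huc t) hC
  have hconvt_cont : ∀ t, Continuous (fun x => ∫ ξ : ℝ, K ξ * pdt u (x - ξ) t) := by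
    intro t
    obtain ⟨C, hC0, hC⟩ := bound_of_periodic (hpdtc t) (pdt_periodic hu hper t)
    exact conv_continuous hK (hpdtc t) hC
  have hconvx_cont : ∀ t, Continuous (fun x => ∫ ξ : ℝ, K ξ * pdx u (x - ξ) t) := by
    intro t
    obtain ⟨C, hC0, hC⟩ := bound_of_periodic (hpdxc t) (pdx_periodic hu hper t)
    exact conv_continuous hK (hpdxc t) hC
  -- Step 1: H is differentiable with derivative ∫ Φ'
  have key : ∀ t₀ : ℝ, HasDerivAt H (∫ x in (0:ℝ)..(2 * π), Φ' x t₀) t₀ := by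
    intro t₀
    obtain ⟨Cu, hCu0, hCu⟩ := bound_of_periodic2 hucont hper (t₀ - 1) (t₀ + 1)
    obtain ⟨Ct, hCt0, hCt⟩ := bound_of_periodic2 (continuous_pdt hu)
      (pdt_periodic hu hper) (t₀ - 1) (t₀ + 1)
    obtain ⟨Cf, hCf⟩ := (isCompact_Icc (a := -Cu) (b := Cu)).exists_bound_of_continuousOn
      hf.continuous.continuousOn
    have hCf0 : 0 ≤ Cf :=
      le_trans (norm_nonneg (f (-Cu))) (hCf (-Cu) ⟨le_refl _, by linarith⟩)
    set IK : ℝ := ∫ ξ : ℝ, |K ξ| with hIK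
    have hIK0 : 0 ≤ IK := integral_nonneg fun ξ => abs_nonneg _
    have hball : ∀ t ∈ Metric.ball t₀ 1, t ∈ Icc (t₀ - 1) (t₀ + 1) := by
      intro t ht
      rw [Real.ball_eq_Ioo] at ht
      exact Ioo_subset_Icc_self ht
    have h := intervalIntegral.hasDerivAt_integral_of_dominated_loc_of_deriv_le
      (F := fun t x => F (u x t) + (1 / 2) * u x t * ∫ ξ : ℝ, K ξ * u (x - ξ) t)
      (F' := fun t x => Φ' x t) (a := 0) (b := 2 * π) (x₀ := t₀) (s := Metric.ball t₀ 1)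
      (bound := fun _ => Cf * Ct + (1 / 2 * Ct * (IK * Cu) + 1 / 2 * Cu * (IK * Ct)))
      (Metric.ball_mem_nhds _ one_pos)
      (Filter.Eventually.of_forall fun t =>
        ((hFc.comp (huc t)).add
          ((continuous_const.mul (huc t)).mul (hconv_cont t))).aestronglyMeasurable)
      (((hFc.comp (huc t₀)).add
          ((continuous_const.mul (huc t₀)).mul (hconv_cont t₀))).intervalIntegrable _ _)
      (((hf.continuous.comp (huc t₀)).mul (hpdtc t₀)).add
          (((continuous_const.mul (hpdtc t₀)).mul (hconv_cont t₀)).add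
            ((continuous_const.mul (huc t₀)).mul (hconvt_cont t₀)))).aestronglyMeasurable
      (Filter.Eventually.of_forall fun x _ t ht => by
        have hu' : |u x t| ≤ Cu := hCu x t (hball t ht)
        have ht' : |pdt u x t| ≤ Ct := hCt x t (hball t ht)
        have hf' : |f (u x t)| ≤ Cf := by
          have := hCf (u x t) (abs_le.mp hu')
          simpa [Real.norm_eq_abs] using this
        have hc1 : |∫ ξ : ℝ, K ξ * u (x - ξ) t| ≤ IK * Cu :=
          conv_bound hK (w := fun y => u y t) (fun y => hCu y t (hball t ht)) x
        have hc2 : |∫ ξ : ℝ, K ξ * pdt u (x - ξ) t| ≤ IK * Ct :=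
          conv_bound hK (w := fun y => pdt u y t) (fun y => hCt y t (hball t ht)) x
        rw [hΦdef, Real.norm_eq_abs]
        refine (abs_add_le _ _).trans (add_le_add ?_ ((abs_add_le _ _).trans (add_le_add ?_ ?_)))
        · rw [abs_mul]
          exact mul_le_mul hf' ht' (abs_nonneg _) hCf0
        · rw [abs_mul, abs_mul, abs_of_pos (show (0:ℝ) < 1/2 by norm_num)]
          refine mul_le_mul (mul_le_mul le_rfl ht' (abs_nonneg _) (by norm_num)) hc1
            (abs_nonneg _) (by positivity)
        · rw [abs_mul, abs_mul, abs_of_pos (show (0:ℝ) < 1/2 by norm_num)]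
          refine mul_le_mul (mul_le_mul le_rfl hu' (abs_nonneg _) (by norm_num)) hc2
            (abs_nonneg _) (by positivity))
      (intervalIntegrable_const (μ := volume))
      (Filter.Eventually.of_forall fun x _ t _ => by
        have h1 : HasDerivAt (fun s => F (u x s)) (f (u x t) * pdt u x t) t :=
          (hF (u x t)).comp t (hasDerivAt_pdt hu x t)
        have h2 := ((hasDerivAt_pdt hu x t).const_mul ((1:ℝ)/2)).mul
          (conv_t_hasDerivAt hK hu hper x t)
        exact h1.add h2)
    exact h.2
  -- Step 2: the derivative vanishes on Ioo a b
  have key0 : ∀ t₀ ∈ Ioo a b, (∫ x in (0:ℝ)..(2 * π), Φ' x t₀) = 0 := by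
    intro t₀ ht₀
    have hsym := conv_symm hK hKeven (huc t₀) (hpdtc t₀) (hper t₀) (pdt_periodic hu hper t₀)
    unfold conv at hsym
    set G : ℝ → ℝ := fun x => f (u x t₀) + ∫ ξ : ℝ, K ξ * u (x - ξ) t₀ with hGdef
    set G' : ℝ → ℝ := fun x => deriv f (u x t₀) * pdx u x t₀ + ∫ ξ : ℝ, K ξ * pdx u (x - ξ) t₀
      with hG'def
    have hG : ∀ x, HasDerivAt G (G' x) x := fun x =>
      (((hf.differentiable one_ne_zero) (u x t₀)).hasDerivAt.comp x (hasDerivAt_pdx hu x t₀)).add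
        (conv_x_hasDerivAt hK hu hper t₀ x)
    have hG'c : Continuous G' :=
      (((hf.continuous_deriv le_rfl).comp (huc t₀)).mul (hpdxc t₀)).add (hconvx_cont t₀)
    have hGc : Continuous G := (hf.continuous.comp (huc t₀)).add (hconv_cont t₀)
    have hPDE' : ∀ x, pdt u x t₀ = -G' x := by
      intro x
      have h0 := hPDE x t₀ ht₀
      have e1 : deriv (fun s => u x s) t₀ = pdt u x t₀ := (hasDerivAt_pdt hu x t₀).deriv
      have e2 : ∀ z, deriv (fun y => u y t₀) z = pdx u z t₀ := fun z =>
        (hasDerivAt_pdx hu z t₀).deriv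
      have e3 : deriv (fun y => f (u y t₀)) x = deriv f (u x t₀) * pdx u x t₀ :=
        (((hf.differentiable one_ne_zero) (u x t₀)).hasDerivAt.comp x (hasDerivAt_pdx hu x t₀)).deriv
      rw [e1, e3] at h0
      simp only [e2] at h0
      simp only [hG'def]
      linarith
    have hGper : G (2 * π) = G 0 := by
      have h1 : u (2 * π) t₀ = u 0 t₀ := by simpa using hper t₀ 0
      have h2 : (∫ ξ : ℝ, K ξ * u (2 * π - ξ) t₀) = ∫ ξ : ℝ, K ξ * u (0 - ξ) t₀ := by
        apply integral_congr_ae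
        filter_upwards with ξ
        have h3 : u (2 * π - ξ) t₀ = u (0 - ξ) t₀ := by
          have h4 := hper t₀ (-ξ)
          simp only at h4
          rw [show (2 * π - ξ : ℝ) = -ξ + 2 * π by ring, h4, show (0 - ξ : ℝ) = -ξ by ring]
        rw [h3]
      simp only [hGdef, h1, h2]
    have hq : ∀ x ∈ uIcc (0:ℝ) (2 * π),
        HasDerivAt (fun y => 1 / 2 * G y * G y) (G x * G' x) x := by
      intro x _
      have h5 := ((hG x).const_mul ((1:ℝ)/2)).mul (hG x)
      exact h5.congr_deriv (by ring)
    have hFTC : ∫ x in (0:ℝ)..(2 * π), G x * G' x = 0 := by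
      rw [intervalIntegral.integral_eq_sub_of_hasDerivAt hq
        ((hGc.mul hG'c).intervalIntegrable _ _)]
      simp [hGper]
    have hIa : IntervalIntegrable (fun x => f (u x t₀) * pdt u x t₀) volume 0 (2 * π) :=
      ((hf.continuous.comp (huc t₀)).mul (hpdtc t₀)).intervalIntegrable _ _
    have hIb : IntervalIntegrable
        (fun x => 1 / 2 * pdt u x t₀ * (∫ ξ : ℝ, K ξ * u (x - ξ) t₀)) volume 0 (2 * π) :=
      (((continuous_const.mul (hpdtc t₀)).mul (hconv_cont t₀))).intervalIntegrable _ _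
    have hIc : IntervalIntegrable
        (fun x => 1 / 2 * u x t₀ * (∫ ξ : ℝ, K ξ * pdt u (x - ξ) t₀)) volume 0 (2 * π) :=
      (((continuous_const.mul (huc t₀)).mul (hconvt_cont t₀))).intervalIntegrable _ _
    have split : (∫ x in (0:ℝ)..(2 * π), Φ' x t₀)
        = (∫ x in (0:ℝ)..(2 * π), f (u x t₀) * pdt u x t₀)
          + ((∫ x in (0:ℝ)..(2 * π), 1 / 2 * pdt u x t₀ * (∫ ξ : ℝ, K ξ * u (x - ξ) t₀))
            + (∫ x in (0:ℝ)..(2 * π), 1 / 2 * u x t₀ * (∫ ξ : ℝ, K ξ * pdt u (x - ξ) t₀))) := by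
      rw [hΦdef, intervalIntegral.integral_add hIa (hIb.add hIc),
        intervalIntegral.integral_add hIb hIc]
    have e5 : (∫ x in (0:ℝ)..(2 * π), 1 / 2 * u x t₀ * (∫ ξ : ℝ, K ξ * pdt u (x - ξ) t₀))
        = ∫ x in (0:ℝ)..(2 * π), 1 / 2 * pdt u x t₀ * (∫ ξ : ℝ, K ξ * u (x - ξ) t₀) := by
      simp only [mul_assoc]
      rw [intervalIntegral.integral_const_mul, intervalIntegral.integral_const_mul, hsym]
    have e6 : (∫ x in (0:ℝ)..(2 * π), Φ' x t₀)
        = ∫ x in (0:ℝ)..(2 * π), G x * pdt u x t₀ := by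
      rw [split, e5, ← intervalIntegral.integral_add hIb hIb]
      rw [← intervalIntegral.integral_add hIa (hIb.add hIb)]
      apply intervalIntegral.integral_congr
      intro x _
      simp only [hGdef]
      ring
    rw [e6]
    have e7 : (∫ x in (0:ℝ)..(2 * π), G x * pdt u x t₀)
        = ∫ x in (0:ℝ)..(2 * π), -(G x * G' x) := by
      apply intervalIntegral.integral_congr
      intro x _
      show G x * pdt u x t₀ = -(G x * G' x)
      rw [hPDE' x]
      ring
    rw [e7, intervalIntegral.integral_neg, hFTC, neg_zero]
  -- Step 3: conclude
  have key2 : ∀ t₀ ∈ Ioo a b, HasDerivAt H 0 t₀ := fun t₀ ht₀ => key0 t₀ ht₀ ▸ key t₀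
  have hmain : ∀ s₁ s₂, s₁ ∈ Ioo a b → s₂ ∈ Ioo a b → s₁ ≤ s₂ → H s₁ = H s₂ := by
    intro s₁ s₂ hs₁ hs₂ hle
    have hsub : Icc s₁ s₂ ⊆ Ioo a b := fun x hx =>
      ⟨lt_of_lt_of_le hs₁.1 hx.1, lt_of_le_of_lt hx.2 hs₂.2⟩
    have hc := constant_of_has_deriv_right_zero (f := H) (a := s₁) (b := s₂)
      (fun x hx => (key2 x (hsub hx)).continuousAt.continuousWithinAt)
      (fun x hx => (key2 x (hsub (Ico_subset_Icc_self hx))).hasDerivWithinAt)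
    exact (hc s₂ (right_mem_Icc.2 hle)).symm
  rcases le_total t₁ t₂ with h12 | h21
  · exact hmain t₁ t₂ ht₁ ht₂ h12
  · exact (hmain t₂ t₁ ht₂ ht₁ h21).symm
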